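/- Let n ≥ 2, let t > 0 be a real number, and let λ₁, …, λₙ be real numbers with λᵢ > 0 for all i < n, λₙ < 0, and ∑_{i=1}^n 1/λᵢ ≤ −t. Then for all complex numbers a₁, …, aₙ, one has ∑_{i=1}^n (2·λᵢ/(1+λᵢ²)²)·|aᵢ|² ≥ −(2/t)·|∑_{i=1}^n aᵢ/(1+λᵢ²)|². -/

import Mathlib

open Real Finset

set_option maxHeartbeats 1000000 in
/-- The key algebraic inequality (3.27)–(3.30) of the C² estimate: if `λᵢ > 0`
for `i < n`, `λₙ < 0` and `∑ 1/λᵢ ≤ -t` with `t > 0`, then for all complex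
numbers `a₁, …, aₙ`,
`∑ (2λᵢ/(1+λᵢ²)²)|aᵢ|² ≥ -(2/t)·|∑ aᵢ/(1+λᵢ²)|²`. -/
theorem dHYM_weighted_cauchy_schwarz
    (n : ℕ) (hn : 2 ≤ n) (t : ℝ) (ht : 0 < t)
    (lam : Fin n → ℝ)
    (hpos : ∀ i : Fin n, (i : ℕ) < n - 1 → 0 < lam i)
    (hneg : lam ⟨n - 1, by omega⟩ < 0)
    (hrec : ∑ i, 1 / lam i ≤ -t)
    (a : Fin n → ℂ) :
    -(2 / t) * ‖∑ i, a i / (1 + (lam i : ℂ) ^ 2)‖ ^ 2 ≤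
      ∑ i, 2 * lam i / (1 + lam i ^ 2) ^ 2 * ‖a i‖ ^ 2 := by
  obtain ⟨m, rfl⟩ : ∃ m, n = m + 1 := ⟨n - 1, by omega⟩
  have hm : 1 ≤ m := by omega
  have hneg' : lam (Fin.last m) < 0 := hneg
  have hposc : ∀ i : Fin m, 0 < lam i.castSucc := fun i =>
    hpos i.castSucc (by simpa using i.isLt)
  -- abbreviations
  set A : Fin (m+1) → ℝ := fun i => ‖a i‖ with hA
  have hAnn : ∀ i, 0 ≤ A i := fun i => norm_nonneg _
  set R : ℝ := ∑ i : Fin m, 1 / lam i.castSucc with hRdef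
  have hRpos : 0 < R :=
    Finset.sum_pos (fun i _ => one_div_pos.mpr (hposc i))
      ⟨⟨0, by omega⟩, Finset.mem_univ _⟩
  -- denominators are positive reals
  have hdenpos : ∀ i : Fin (m+1), (0:ℝ) < 1 + lam i ^ 2 := fun i => by positivity
  have hden : ∀ i : Fin (m+1),
      ‖a i / (1 + (lam i : ℂ) ^ 2)‖ = A i / (1 + lam i ^ 2) := by
    intro i
    rw [norm_div]
    congr 1
    have h : (1 + (lam i:ℂ)^2) = ((1 + lam i ^2 : ℝ) : ℂ) := by push_cast; ring
    rw [h, Complex.norm_real, Real.norm_eq_abs, abs_of_pos (hdenpos i)]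
  set S : ℂ := ∑ i : Fin (m+1), a i / (1 + (lam i : ℂ) ^ 2) with hSdef
  set T : ℂ := ∑ i : Fin m, a i.castSucc / (1 + (lam i.castSucc : ℂ) ^ 2) with hTdef
  have hST : S = T + a (Fin.last m) / (1 + (lam (Fin.last m) : ℂ) ^ 2) :=
    Fin.sum_univ_castSucc _
  set s : ℝ := ‖S‖ with hsdef
  set τ : ℝ := ‖T‖ with hτdef
  set u : ℝ := A (Fin.last m) / (1 + lam (Fin.last m) ^ 2) with hudef
  have hsnn : 0 ≤ s := norm_nonneg _
  have hτnn : 0 ≤ τ := norm_nonneg _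
  have hunn : 0 ≤ u := div_nonneg (hAnn _) (hdenpos _).le
  have hu : u ≤ s + τ := by
    have h1 : a (Fin.last m) / (1 + (lam (Fin.last m) : ℂ) ^ 2) = S - T := by
      rw [hST]; ring
    have h2 : u = ‖S - T‖ := by rw [← h1, hden]
    rw [h2]
    calc ‖S - T‖ ≤ ‖S‖ + ‖T‖ := by
            simpa [sub_eq_add_neg] using norm_add_le S (-T)
      _ = s + τ := rfl
  -- Cauchy–Schwarz
  set P : ℝ := ∑ i : Fin m, lam i.castSucc / (1 + lam i.castSucc ^ 2) ^ 2 * A i.castSucc ^ 2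
    with hPdef
  have hPnn : 0 ≤ P := Finset.sum_nonneg fun i _ =>
    mul_nonneg (div_nonneg (hposc i).le (by positivity)) (sq_nonneg _)
  set Q : ℝ := ∑ i : Fin m, A i.castSucc / (1 + lam i.castSucc ^ 2) with hQdef
  have hτQ : τ ≤ Q := by
    calc τ ≤ ∑ i : Fin m, ‖a i.castSucc / (1 + (lam i.castSucc : ℂ) ^ 2)‖ :=
          norm_sum_le _ _
      _ = Q := Finset.sum_congr rfl fun i _ => hden i.castSucc
  have hCS : Q ^ 2 ≤ R * P := by
    have h := Finset.sum_mul_sq_le_sq_mul_sq Finset.univ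
      (fun i : Fin m => Real.sqrt (1 / lam i.castSucc))
      (fun i : Fin m => Real.sqrt (lam i.castSucc) * (A i.castSucc / (1 + lam i.castSucc ^ 2)))
    have e1 : ∑ i : Fin m, Real.sqrt (1 / lam i.castSucc) *
        (Real.sqrt (lam i.castSucc) * (A i.castSucc / (1 + lam i.castSucc ^ 2))) = Q := by
      refine Finset.sum_congr rfl fun i _ => ?_
      rw [← mul_assoc, ← Real.sqrt_mul (one_div_pos.mpr (hposc i)).le,
        one_div_mul_cancel (hposc i).ne',
        Real.sqrt_one, one_mul]
    have e2 : ∑ i : Fin m, Real.sqrt (1 / lam i.castSucc) ^ 2 = R := by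
      refine Finset.sum_congr rfl fun i _ => ?_
      rw [Real.sq_sqrt (one_div_pos.mpr (hposc i)).le]
    have e3 : ∑ i : Fin m, (Real.sqrt (lam i.castSucc) *
        (A i.castSucc / (1 + lam i.castSucc ^ 2))) ^ 2 = P := by
      refine Finset.sum_congr rfl fun i _ => ?_
      rw [mul_pow, Real.sq_sqrt (hposc i).le]
      field_simp
    rw [e1, e2, e3] at h
    exact h
  have h3 : τ ^ 2 ≤ R * P := le_trans (pow_le_pow_left₀ hτnn hτQ 2) hCS
  -- bound on the negative eigenvalue
  rw [Fin.sum_univ_castSucc, ← hRdef] at hrec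
  clear_value A R S T s τ u P Q
  have key1 : -lam (Fin.last m) * (t + R) ≤ 1 := by
    have h1 : 1 / lam (Fin.last m) ≤ -(t + R) := by linarith
    have hx := mul_le_mul_of_nonneg_left h1 (neg_nonneg.mpr hneg'.le)
    have hc : -lam (Fin.last m) * (1 / lam (Fin.last m)) = -1 := by
      rw [mul_one_div, neg_div, div_self (ne_of_lt hneg')]
    nlinarith [hx, hc]
  -- key inequality
  have step_b : 2 * (t * s) * τ ≤ R * s ^ 2 + t ^ 2 * P := by
    nlinarith [sq_nonneg (R * s - t * τ), mul_le_mul_of_nonneg_left h3 (sq_nonneg t), hRpos]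
  have key : t * (s + τ) ^ 2 ≤ (t + R) * (t * P + s ^ 2) := by
    nlinarith [step_b, mul_le_mul_of_nonneg_left h3 ht.le]
  have hMain : -lam (Fin.last m) * (s + τ) ^ 2 * t ≤ t * P + s ^ 2 := by
    have h5 := mul_le_mul_of_nonneg_right key1
      (mul_nonneg ht.le (sq_nonneg (s + τ)))
    nlinarith [key, h5, show (0:ℝ) < t + R from by linarith]
  have hu2 : u ^ 2 ≤ (s + τ) ^ 2 := pow_le_pow_left₀ hunn hu 2
  have hstep : -lam (Fin.last m) * u ^ 2 * t ≤ t * P + s ^ 2 := by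
    have h6 := mul_le_mul_of_nonneg_left hu2
      (mul_nonneg (neg_nonneg.mpr hneg'.le) ht.le)
    nlinarith [h6, hMain]
  -- finish
  rw [Fin.sum_univ_castSucc]
  have hsum : ∑ i : Fin m,
      2 * lam i.castSucc / (1 + lam i.castSucc ^ 2) ^ 2 * ‖a i.castSucc‖ ^ 2
      = 2 * P := by
    rw [hPdef, Finset.mul_sum]
    refine Finset.sum_congr rfl fun i _ => ?_
    simp only [hA]
    ring
  have hlast : 2 * lam (Fin.last m) / (1 + lam (Fin.last m) ^ 2) ^ 2 *
      ‖a (Fin.last m)‖ ^ 2 = 2 * lam (Fin.last m) * u ^ 2 := by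
    simp only [hudef, hA]
    field_simp
    try ring
  rw [hsum, hlast]
  have hfin : -(2 * s ^ 2) / t ≤ 2 * P + 2 * lam (Fin.last m) * u ^ 2 := by
    rw [div_le_iff₀ ht]
    nlinarith [hstep]
  calc -(2 / t) * s ^ 2 = -(2 * s ^ 2) / t := by ring
    _ ≤ _ := hfin
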